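/- For every odd prime p, the graph G_{(p+1)/2} from the construction (on 2·((p+1)/2) + 4 = p + 5 vertices) satisfies wcdim(G_{(p+1)/2}, 𝔽_p) = 2 and wcdim(G_{(p+1)/2}, ℚ) = 1, since 2·((p+1)/2) − 1 = p. -/

import Mathlib

/-- `M` is an independent set of `G` (as a finset): pairwise non-adjacent vertices. -/
def IsIndepF {V : Type*} (G : SimpleGraph V) (M : Finset V) : Prop :=
  ∀ v ∈ M, ∀ w ∈ M, ¬ G.Adj v w

/-- `M` is a maximal independent set of `G`: independent and not properly contained
in any other independent set. -/
def IsMaxIndepF {V : Type*} (G : SimpleGraph V) (M : Finset V) : Prop :=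
  IsIndepF G M ∧ ∀ M' : Finset V, IsIndepF G M' → M ⊆ M' → M' = M

/-- The well-covered space of `G` over `F`: all weightings `w : V → F` whose sum over
every maximal independent set of `G` is the same constant. -/
def wcSpace (F : Type*) [Field F] {V : Type*} (G : SimpleGraph V) : Submodule F (V → F) where
  carrier := {w | ∀ M N : Finset V, IsMaxIndepF G M → IsMaxIndepF G N →
    ∑ v ∈ M, w v = ∑ v ∈ N, w v}
  add_mem' := by
    intro a b ha hb M N hM hN
    simp only [Pi.add_apply, Finset.sum_add_distrib, ha M N hM hN, hb M N hM hN]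
  zero_mem' := by intro M N _ _; simp
  smul_mem' := by
    intro c a ha M N hM hN
    simp only [Pi.smul_apply, smul_eq_mul, ← Finset.mul_sum, ha M N hM hN]

/-- The well-covered dimension of `G` over `F`. -/
noncomputable def wcdim (F : Type*) [Field F] {V : Type*} (G : SimpleGraph V) : ℕ :=
  Module.finrank F (wcSpace F G)

/-- The vertices `y i`, `u i`, `v₁ v₂ w₁ w₂ = 0 1 2 3` of the graph `Gₙ`. -/
abbrev GnV (n : ℕ) := Fin n ⊕ Fin n ⊕ Fin 4

/-- The graph `Gₙ`: `{y₁,…,yₙ, v₁, v₂}` induces `K_{n+2}`, `{w₁, w₂, u₁,…,uₙ}` induces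
`K_{2,n}` with parts `{w₁, w₂}` and `{u₁,…,uₙ}`, plus the edges `v₁w₁`, `v₂w₂`, and
`yᵢuⱼ` for all `i ≠ j`. -/
def Gn (n : ℕ) : SimpleGraph (GnV n) :=
  SimpleGraph.fromRel fun x y =>
    match x, y with
    | Sum.inl _, Sum.inl _ => True
    | Sum.inl i, Sum.inr (Sum.inl j) => i ≠ j
    | Sum.inl _, Sum.inr (Sum.inr k) => k = 0 ∨ k = 1
    | Sum.inr (Sum.inl _), Sum.inr (Sum.inr k) => k = 2 ∨ k = 3
    | Sum.inr (Sum.inr a), Sum.inr (Sum.inr b) =>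
        (a, b) ∈ ([(0, 1), (0, 2), (1, 3)] : List (Fin 4 × Fin 4))
    | _, _ => False

namespace WCaux

open Finset

variable {n : ℕ} {F : Type*} [Field F]

def vY (i : Fin n) : GnV n := Sum.inl i
def vU (i : Fin n) : GnV n := Sum.inr (Sum.inl i)
def vZ (k : Fin 4) : GnV n := Sum.inr (Sum.inr k)

lemma vU_inj : Function.Injective (vU (n := n)) := by
  intro a b h; simpa [vU] using h

/- adjacency facts -/
lemma adj_yy {i j : Fin n} : (Gn n).Adj (vY i) (vY j) ↔ i ≠ j := by
  simp [vY, Gn, SimpleGraph.fromRel_adj, Sum.inl_injective.ne_iff]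

lemma adj_yu {i j : Fin n} : (Gn n).Adj (vY i) (vU j) ↔ i ≠ j := by
  simp [vY, vU, Gn, SimpleGraph.fromRel_adj]

lemma adj_yz {i : Fin n} {k : Fin 4} : (Gn n).Adj (vY i) (vZ k) ↔ (k = 0 ∨ k = 1) := by
  simp [vY, vZ, Gn, SimpleGraph.fromRel_adj]

lemma adj_uz {i : Fin n} {k : Fin 4} : (Gn n).Adj (vU i) (vZ k) ↔ (k = 2 ∨ k = 3) := by
  simp [vU, vZ, Gn, SimpleGraph.fromRel_adj]

lemma not_adj_uu {i j : Fin n} : ¬ (Gn n).Adj (vU i) (vU j) := by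
  simp [vU, Gn, SimpleGraph.fromRel_adj]

lemma adj_zz {a b : Fin 4} : (Gn n).Adj (vZ a) (vZ b) ↔
    ((a, b) ∈ ([(0,1),(0,2),(1,3),(1,0),(2,0),(3,1)] : List (Fin 4 × Fin 4))) := by
  simp [vZ, Gn, SimpleGraph.fromRel_adj]
  fin_cases a <;> fin_cases b <;> decide

/- the maximal independent sets -/
def setA (n : ℕ) (k : Fin 4) : Finset (GnV n) := (univ.image vU) ∪ {vZ k}
def setB (i : Fin n) : Finset (GnV n) := {vY i, vU i}
def setC (i : Fin n) : Finset (GnV n) := {vY i, vZ 2, vZ 3}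
def setD1 (n : ℕ) : Finset (GnV n) := {vZ 0, vZ 3}
def setD2 (n : ℕ) : Finset (GnV n) := {vZ 1, vZ 2}

lemma mem_setA {k : Fin 4} {x : GnV n} : x ∈ setA n k ↔ (∃ i, vU i = x) ∨ x = vZ k := by
  simp [setA]
  exact or_comm

lemma mem_setB {i : Fin n} {x : GnV n} : x ∈ setB i ↔ x = vY i ∨ x = vU i := by
  simp [setB]

lemma mem_setC {i : Fin n} {x : GnV n} : x ∈ setC i ↔ x = vY i ∨ x = vZ 2 ∨ x = vZ 3 := by
  simp [setC]

lemma mem_setD1 {x : GnV n} : x ∈ setD1 n ↔ x = vZ 0 ∨ x = vZ 3 := by simp [setD1]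
lemma mem_setD2 {x : GnV n} : x ∈ setD2 n ↔ x = vZ 1 ∨ x = vZ 2 := by simp [setD2]

/- independence -/
lemma indep_setA {k : Fin 4} (hk : k = 0 ∨ k = 1) : IsIndepF (Gn n) (setA n k) := by
  intro v hv w hw
  rw [mem_setA] at hv hw
  rcases hv with ⟨i, rfl⟩ | rfl <;> rcases hw with ⟨j, rfl⟩ | rfl
  · exact not_adj_uu
  · rw [adj_uz]; rcases hk with rfl | rfl <;> decide
  · rw [(Gn n).adj_comm, adj_uz]; rcases hk with rfl | rfl <;> decide
  · exact (Gn n).irrefl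

lemma indep_setB {i : Fin n} : IsIndepF (Gn n) (setB i) := by
  intro v hv w hw
  rw [mem_setB] at hv hw
  rcases hv with rfl | rfl <;> rcases hw with rfl | rfl
  · exact (Gn n).irrefl
  · rw [adj_yu]; simp
  · rw [(Gn n).adj_comm, adj_yu]; simp
  · exact (Gn n).irrefl

lemma indep_setC {i : Fin n} : IsIndepF (Gn n) (setC i) := by
  intro v hv w hw
  rw [mem_setC] at hv hw
  rcases hv with rfl | rfl | rfl <;> rcases hw with rfl | rfl | rfl
  · exact (Gn n).irrefl
  · rw [adj_yz]; decide
  · rw [adj_yz]; decide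
  · rw [(Gn n).adj_comm, adj_yz]; decide
  · exact (Gn n).irrefl
  · rw [adj_zz]; decide
  · rw [(Gn n).adj_comm, adj_yz]; decide
  · rw [adj_zz]; decide
  · exact (Gn n).irrefl

lemma indep_setD1 : IsIndepF (Gn n) (setD1 n) := by
  intro v hv w hw
  rw [mem_setD1] at hv hw
  rcases hv with rfl | rfl <;> rcases hw with rfl | rfl <;>
    first | exact (Gn n).irrefl | (rw [adj_zz]; decide)

lemma indep_setD2 : IsIndepF (Gn n) (setD2 n) := by
  intro v hv w hw
  rw [mem_setD2] at hv hw
  rcases hv with rfl | rfl <;> rcases hw with rfl | rfl <;>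
    first | exact (Gn n).irrefl | (rw [adj_zz]; decide)

/- helper for maximality -/
lemma maxIndep_of {V : Type*} {G : SimpleGraph V} {M : Finset V} (h1 : IsIndepF G M)
    (h2 : ∀ x, x ∉ M → ∃ m ∈ M, G.Adj x m) : IsMaxIndepF G M := by
  refine ⟨h1, fun M' hM' hsub => ?_⟩
  apply Finset.Subset.antisymm _ hsub
  intro x hx
  by_contra hx'
  obtain ⟨m, hm, hadj⟩ := h2 x hx'
  exact hM' x hx m (hsub hm) hadj

lemma eq_of_max_subset {V : Type*} {G : SimpleGraph V} {M X : Finset V}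
    (hM : IsMaxIndepF G M) (hX : IsIndepF G X) (h : M ⊆ X) : M = X :=
  (hM.2 X hX h).symm

/- maximality -/
lemma max_setA (hn : 0 < n) {k : Fin 4} (hk : k = 0 ∨ k = 1) :
    IsMaxIndepF (Gn n) (setA n k) := by
  refine maxIndep_of (indep_setA hk) fun x hx => ?_
  rcases x with i | i | c
  · exact ⟨vZ k, mem_setA.2 (Or.inr rfl), adj_yz.2 hk⟩
  · exact absurd (mem_setA.2 (Or.inl ⟨i, rfl⟩)) hx
  · have huA : vU (⟨0, hn⟩ : Fin n) ∈ setA n k := mem_setA.2 (Or.inl ⟨_, rfl⟩)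
    have hzA : vZ k ∈ setA n k := mem_setA.2 (Or.inr rfl)
    rcases hk with rfl | rfl <;> fin_cases c
    · exact absurd hzA hx
    · exact ⟨vZ 0, hzA, adj_zz.2 (by decide)⟩
    · exact ⟨vZ 0, hzA, adj_zz.2 (by decide)⟩
    · exact ⟨vU ⟨0, hn⟩, huA, (Gn n).adj_comm .. |>.1 (adj_uz.2 (by decide))⟩
    · exact ⟨vZ 1, hzA, adj_zz.2 (by decide)⟩
    · exact absurd hzA hx
    · exact ⟨vU ⟨0, hn⟩, huA, (Gn n).adj_comm .. |>.1 (adj_uz.2 (by decide))⟩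
    · exact ⟨vZ 1, hzA, adj_zz.2 (by decide)⟩

lemma max_setB {i : Fin n} : IsMaxIndepF (Gn n) (setB i) := by
  refine maxIndep_of indep_setB fun x hx => ?_
  rcases x with j | j | c
  · have : j ≠ i := fun h => hx (mem_setB.2 (Or.inl (by rw [h]; rfl)))
    exact ⟨vY i, mem_setB.2 (Or.inl rfl), adj_yy.2 this⟩
  · have : j ≠ i := fun h => hx (mem_setB.2 (Or.inr (by rw [h]; rfl)))
    exact ⟨vY i, mem_setB.2 (Or.inl rfl), (Gn n).adj_comm .. |>.1 (adj_yu.2 (Ne.symm this))⟩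
  · fin_cases c
    · exact ⟨vY i, mem_setB.2 (Or.inl rfl), (Gn n).adj_comm .. |>.1 (adj_yz.2 (by decide))⟩
    · exact ⟨vY i, mem_setB.2 (Or.inl rfl), (Gn n).adj_comm .. |>.1 (adj_yz.2 (by decide))⟩
    · exact ⟨vU i, mem_setB.2 (Or.inr rfl), (Gn n).adj_comm .. |>.1 (adj_uz.2 (by decide))⟩
    · exact ⟨vU i, mem_setB.2 (Or.inr rfl), (Gn n).adj_comm .. |>.1 (adj_uz.2 (by decide))⟩

lemma max_setC {i : Fin n} : IsMaxIndepF (Gn n) (setC i) := by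
  refine maxIndep_of indep_setC fun x hx => ?_
  rcases x with j | j | c
  · have : j ≠ i := fun h => hx (mem_setC.2 (Or.inl (by rw [h]; rfl)))
    exact ⟨vY i, mem_setC.2 (Or.inl rfl), adj_yy.2 this⟩
  · exact ⟨vZ 2, mem_setC.2 (Or.inr (Or.inl rfl)), adj_uz.2 (by decide)⟩
  · fin_cases c
    · exact ⟨vY i, mem_setC.2 (Or.inl rfl), (Gn n).adj_comm .. |>.1 (adj_yz.2 (by decide))⟩
    · exact ⟨vY i, mem_setC.2 (Or.inl rfl), (Gn n).adj_comm .. |>.1 (adj_yz.2 (by decide))⟩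
    · exact absurd (mem_setC.2 (Or.inr (Or.inl rfl))) hx
    · exact absurd (mem_setC.2 (Or.inr (Or.inr rfl))) hx

lemma max_setD1 : IsMaxIndepF (Gn n) (setD1 n) := by
  refine maxIndep_of indep_setD1 fun x hx => ?_
  rcases x with j | j | c
  · exact ⟨vZ 0, mem_setD1.2 (Or.inl rfl), adj_yz.2 (by decide)⟩
  · exact ⟨vZ 3, mem_setD1.2 (Or.inr rfl), adj_uz.2 (by decide)⟩
  · fin_cases c
    · exact absurd (mem_setD1.2 (Or.inl rfl)) hx
    · exact ⟨vZ 0, mem_setD1.2 (Or.inl rfl), adj_zz.2 (by decide)⟩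
    · exact ⟨vZ 0, mem_setD1.2 (Or.inl rfl), adj_zz.2 (by decide)⟩
    · exact absurd (mem_setD1.2 (Or.inr rfl)) hx

lemma max_setD2 : IsMaxIndepF (Gn n) (setD2 n) := by
  refine maxIndep_of indep_setD2 fun x hx => ?_
  rcases x with j | j | c
  · exact ⟨vZ 1, mem_setD2.2 (Or.inl rfl), adj_yz.2 (by decide)⟩
  · exact ⟨vZ 2, mem_setD2.2 (Or.inr rfl), adj_uz.2 (by decide)⟩
  · fin_cases c
    · exact ⟨vZ 1, mem_setD2.2 (Or.inl rfl), adj_zz.2 (by decide)⟩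
    · exact absurd (mem_setD2.2 (Or.inl rfl)) hx
    · exact absurd (mem_setD2.2 (Or.inr rfl)) hx
    · exact ⟨vZ 1, mem_setD2.2 (Or.inl rfl), adj_zz.2 (by decide)⟩

/- classification -/
lemma classify (hn : 0 < n) {M : Finset (GnV n)} (hM : IsMaxIndepF (Gn n) M) :
    M = setA n 0 ∨ M = setA n 1 ∨ (∃ i, M = setB i) ∨ (∃ i, M = setC i) ∨
    M = setD1 n ∨ M = setD2 n := by
  have hind := hM.1
  by_cases hy : ∃ i, vY i ∈ M
  · obtain ⟨i, hi⟩ := hy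
    by_cases hu : vU i ∈ M
    · refine Or.inr (Or.inr (Or.inl ⟨i, eq_of_max_subset hM indep_setB fun x hx => ?_⟩))
      rcases x with j | j | c
      · rcases eq_or_ne j i with rfl | hji
        · exact mem_setB.2 (Or.inl rfl)
        · exact absurd (adj_yy.2 hji) (hind _ hx _ hi)
      · rcases eq_or_ne j i with rfl | hji
        · exact mem_setB.2 (Or.inr rfl)
        · exact absurd (adj_yu.2 hji.symm) (hind _ hi _ hx)
      · exfalso; fin_cases c
        · exact hind _ hi _ hx (adj_yz.2 (by decide))
        · exact hind _ hi _ hx (adj_yz.2 (by decide))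
        · exact hind _ hu _ hx (adj_uz.2 (by decide))
        · exact hind _ hu _ hx (adj_uz.2 (by decide))
    · refine Or.inr (Or.inr (Or.inr (Or.inl ⟨i, eq_of_max_subset hM indep_setC fun x hx => ?_⟩)))
      rcases x with j | j | c
      · rcases eq_or_ne j i with rfl | hji
        · exact mem_setC.2 (Or.inl rfl)
        · exact absurd (adj_yy.2 hji) (hind _ hx _ hi)
      · rcases eq_or_ne j i with rfl | hji
        · exact absurd hx hu
        · exact absurd (adj_yu.2 hji.symm) (hind _ hi _ hx)
      · fin_cases c
        · exact absurd (adj_yz.2 (by decide)) (hind _ hi _ hx)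
        · exact absurd (adj_yz.2 (by decide)) (hind _ hi _ hx)
        · exact mem_setC.2 (Or.inr (Or.inl rfl))
        · exact mem_setC.2 (Or.inr (Or.inr rfl))
  · push_neg at hy
    by_cases hu : ∃ i, vU i ∈ M
    · obtain ⟨i, hi⟩ := hu
      by_cases h1 : vZ 1 ∈ M
      · refine Or.inr (Or.inl (eq_of_max_subset hM (indep_setA (Or.inr rfl)) fun x hx => ?_))
        rcases x with j | j | c
        · exact absurd hx (hy j)
        · exact mem_setA.2 (Or.inl ⟨j, rfl⟩)
        · fin_cases c
          · exact absurd (adj_zz.2 (by decide)) (hind _ hx _ h1)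
          · exact mem_setA.2 (Or.inr rfl)
          · exact absurd (adj_uz.2 (by decide)) (hind _ hi _ hx)
          · exact absurd (adj_uz.2 (by decide)) (hind _ hi _ hx)
      · refine Or.inl (eq_of_max_subset hM (indep_setA (Or.inl rfl)) fun x hx => ?_)
        rcases x with j | j | c
        · exact absurd hx (hy j)
        · exact mem_setA.2 (Or.inl ⟨j, rfl⟩)
        · fin_cases c
          · exact mem_setA.2 (Or.inr rfl)
          · exact absurd hx h1
          · exact absurd (adj_uz.2 (by decide)) (hind _ hi _ hx)
          · exact absurd (adj_uz.2 (by decide)) (hind _ hi _ hx)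
    · push_neg at hu
      by_cases h0 : vZ 0 ∈ M
      · refine Or.inr (Or.inr (Or.inr (Or.inr (Or.inl
          (eq_of_max_subset hM indep_setD1 fun x hx => ?_)))))
        rcases x with j | j | c
        · exact absurd hx (hy j)
        · exact absurd hx (hu j)
        · fin_cases c
          · exact mem_setD1.2 (Or.inl rfl)
          · exact absurd (adj_zz.2 (by decide)) (hind _ h0 _ hx)
          · exact absurd (adj_zz.2 (by decide)) (hind _ h0 _ hx)
          · exact mem_setD1.2 (Or.inr rfl)
      · by_cases h1 : vZ 1 ∈ M
        · refine Or.inr (Or.inr (Or.inr (Or.inr (Or.inr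
            (eq_of_max_subset hM indep_setD2 fun x hx => ?_)))))
          rcases x with j | j | c
          · exact absurd hx (hy j)
          · exact absurd hx (hu j)
          · fin_cases c
            · exact absurd hx h0
            · exact mem_setD2.2 (Or.inl rfl)
            · exact mem_setD2.2 (Or.inr rfl)
            · exact absurd (adj_zz.2 (by decide)) (hind _ h1 _ hx)
        · refine Or.inr (Or.inr (Or.inr (Or.inl ⟨⟨0, hn⟩,
            eq_of_max_subset hM indep_setC fun x hx => ?_⟩)))
          rcases x with j | j | c
          · exact absurd hx (hy j)
          · exact absurd hx (hu j)
          · fin_cases c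
            · exact absurd hx h0
            · exact absurd hx h1
            · exact mem_setC.2 (Or.inr (Or.inl rfl))
            · exact mem_setC.2 (Or.inr (Or.inr rfl))

/- the two spanning weightings -/
variable (n F) in
def E1 : GnV n → F :=
  Sum.elim (fun _ => 1) (Sum.elim (fun _ => 0) (fun k => if k = 0 ∨ k = 1 then 1 else 0))

variable (n F) in
def E2 : GnV n → F := Sum.elim (fun _ => 0) (Sum.elim (fun _ => 2) (fun _ => 1))

/- sums over the maximal independent sets -/
lemma sum_setA (k : Fin 4) (f : GnV n → F) :
    ∑ v ∈ setA n k, f v = (∑ i, f (vU i)) + f (vZ k) := by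
  rw [setA, Finset.sum_union (by simp [Finset.disjoint_singleton_right, vU, vZ]),
    Finset.sum_image (fun a _ b _ h => vU_inj h), Finset.sum_singleton]

lemma sum_setB (i : Fin n) (f : GnV n → F) :
    ∑ v ∈ setB i, f v = f (vY i) + f (vU i) :=
  Finset.sum_pair (by simp [vY, vU])

lemma sum_setC (i : Fin n) (f : GnV n → F) :
    ∑ v ∈ setC i, f v = f (vY i) + (f (vZ 2) + f (vZ 3)) := by
  rw [setC, Finset.sum_insert (by simp [vY, vZ]), Finset.sum_pair (by simp [vZ])]

lemma sum_setD1 (f : GnV n → F) : ∑ v ∈ setD1 n, f v = f (vZ 0) + f (vZ 3) :=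
  Finset.sum_pair (by simp [vZ])

lemma sum_setD2 (f : GnV n → F) : ∑ v ∈ setD2 n, f v = f (vZ 1) + f (vZ 2) :=
  Finset.sum_pair (by simp [vZ])

lemma E1_mem (hn : 0 < n) : E1 n F ∈ wcSpace F (Gn n) := by
  have key : ∀ M, IsMaxIndepF (Gn n) M → ∑ v ∈ M, E1 n F v = 1 := by
    intro M hM
    rcases classify hn hM with rfl | rfl | ⟨i, rfl⟩ | ⟨i, rfl⟩ | rfl | rfl
    · rw [sum_setA]; simp [E1, vU, vZ]
    · rw [sum_setA]; simp [E1, vU, vZ]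
    · rw [sum_setB]; simp [E1, vY, vU]
    · rw [sum_setC]; simp [E1, vY, vZ]
    · rw [sum_setD1]; simp [E1, vZ]
    · rw [sum_setD2]; simp [E1, vZ]
  intro M N hM hN; rw [key M hM, key N hN]

lemma E2_mem (hn : 0 < n) (h : 2 * (n : F) - 1 = 0) : E2 n F ∈ wcSpace F (Gn n) := by
  have key : ∀ M, IsMaxIndepF (Gn n) M → ∑ v ∈ M, E2 n F v = 2 := by
    intro M hM
    rcases classify hn hM with rfl | rfl | ⟨i, rfl⟩ | ⟨i, rfl⟩ | rfl | rfl
    · rw [sum_setA]; simp only [E2, vU, vZ, Sum.elim_inr, Sum.elim_inl, Finset.sum_const,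
        Finset.card_univ, Fintype.card_fin, nsmul_eq_mul]
      linear_combination h
    · rw [sum_setA]; simp only [E2, vU, vZ, Sum.elim_inr, Sum.elim_inl, Finset.sum_const,
        Finset.card_univ, Fintype.card_fin, nsmul_eq_mul]
      linear_combination h
    · rw [sum_setB]; simp [E2, vY, vU]
    · rw [sum_setC]; norm_num [E2, vY, vZ]
    · rw [sum_setD1]; norm_num [E2, vZ]
    · rw [sum_setD2]; norm_num [E2, vZ]
  intro M N hM hN; rw [key M hM, key N hN]

lemma decomp (hn : 0 < n) {f : GnV n → F} (hf : f ∈ wcSpace F (Gn n)) :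
    f = f (vY ⟨0, hn⟩) • E1 n F + f (vZ 2) • E2 n F ∧
      (2 * (n : F) - 1) * f (vZ 2) = 0 := by
  set i0 : Fin n := ⟨0, hn⟩ with hi0
  set t : F := f (vY i0) + f (vU i0) with ht0
  have eqB : ∀ i : Fin n, f (vY i) + f (vU i) = t := by
    intro i
    have := hf (setB i) (setB i0) max_setB max_setB
    rwa [sum_setB, sum_setB] at this
  have eqC : ∀ i : Fin n, f (vY i) + (f (vZ 2) + f (vZ 3)) = t := by
    intro i
    have := hf (setC i) (setB i0) max_setC max_setB
    rwa [sum_setC, sum_setB] at this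
  have eqA0 : (∑ i, f (vU i)) + f (vZ 0) = t := by
    have := hf (setA n 0) (setB i0) (max_setA hn (Or.inl rfl)) max_setB
    rwa [sum_setA, sum_setB] at this
  have eqA1 : (∑ i, f (vU i)) + f (vZ 1) = t := by
    have := hf (setA n 1) (setB i0) (max_setA hn (Or.inr rfl)) max_setB
    rwa [sum_setA, sum_setB] at this
  have eqD1 : f (vZ 0) + f (vZ 3) = t := by
    have := hf (setD1 n) (setB i0) max_setD1 max_setB
    rwa [sum_setD1, sum_setB] at this
  have eqD2 : f (vZ 1) + f (vZ 2) = t := by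
    have := hf (setD2 n) (setB i0) max_setD2 max_setB
    rwa [sum_setD2, sum_setB] at this
  have hyi : ∀ i : Fin n, f (vY i) = f (vY i0) := by
    intro i; linear_combination eqC i - eqC i0
  have hz3 : f (vZ 3) = f (vZ 2) := by
    linear_combination eqD1 - eqD2 + eqA1 - eqA0
  have hu : ∀ i : Fin n, f (vU i) = 2 * f (vZ 2) := by
    intro i; linear_combination eqB i - eqC i + hz3
  have ht : t = f (vY i0) + 2 * f (vZ 2) := by
    linear_combination - eqC i0 + hz3
  have hz0 : f (vZ 0) = f (vY i0) + f (vZ 2) := by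
    linear_combination eqD1 + ht - hz3
  have hz1 : f (vZ 1) = f (vY i0) + f (vZ 2) := by
    linear_combination eqD2 + ht
  have hsum : (∑ i, f (vU i)) = (n : F) * (2 * f (vZ 2)) := by
    rw [Finset.sum_congr rfl fun i _ => hu i, Finset.sum_const, Finset.card_univ,
      Fintype.card_fin, nsmul_eq_mul]
  constructor
  · funext x
    simp only [Pi.add_apply, Pi.smul_apply, smul_eq_mul]
    rcases x with i | i | c
    · rw [show (Sum.inl i : GnV n) = vY i from rfl, hyi i]; simp [E1, E2, vY]; try ring
    · rw [show (Sum.inr (Sum.inl i) : GnV n) = vU i from rfl, hu i]; simp [E2, E1, vU]; try ring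
    · rw [show (Sum.inr (Sum.inr c) : GnV n) = vZ c from rfl]
      have hc : c = 0 ∨ c = 1 ∨ c = 2 ∨ c = 3 := by fin_cases c <;> simp
      rcases hc with rfl | rfl | rfl | rfl
      · rw [hz0]; norm_num [E1, E2, vZ]; try ring
      · rw [hz1]; norm_num [E1, E2, vZ]; try ring
      · norm_num [E1, E2, vZ, show ¬((2:Fin 4) = 0 ∨ (2:Fin 4) = 1) from by decide]
      · rw [hz3]
        norm_num [E1, E2, vZ, show ¬((3:Fin 4) = 0 ∨ (3:Fin 4) = 1) from by decide]
  · rw [hsum, hz0] at eqA0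
    linear_combination eqA0 + ht

/- the linear equivalences -/
noncomputable def equiv2 (hn : 0 < n) (h : 2 * (n : F) - 1 = 0) :
    wcSpace F (Gn n) ≃ₗ[F] F × F where
  toFun f := (f.1 (vY ⟨0, hn⟩), f.1 (vZ 2))
  map_add' f g := rfl
  map_smul' c f := rfl
  invFun x := ⟨x.1 • E1 n F + x.2 • E2 n F,
    Submodule.add_mem _ (Submodule.smul_mem _ _ (E1_mem hn))
      (Submodule.smul_mem _ _ (E2_mem hn h))⟩
  left_inv f := Subtype.ext ((decomp hn f.2).1).symm
  right_inv x := by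
    ext
    · simp [E1, E2, vY]
    · simp [E1, E2, vZ]

noncomputable def equiv1 (hn : 0 < n) (h : 2 * (n : F) - 1 ≠ 0) :
    wcSpace F (Gn n) ≃ₗ[F] F where
  toFun f := f.1 (vY ⟨0, hn⟩)
  map_add' f g := rfl
  map_smul' c f := rfl
  invFun a := ⟨a • E1 n F, Submodule.smul_mem _ _ (E1_mem hn)⟩
  left_inv f := by
    obtain ⟨h1, h2⟩ := decomp hn f.2
    have hd : f.1 (vZ 2) = 0 := by
      rcases mul_eq_zero.1 h2 with h' | h'
      · exact absurd h' h
      · exact h'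
    refine Subtype.ext ?_
    rw [h1]; rw [hd]; simp
  right_inv a := by simp [E1, vY]

lemma wcdim_eq_two (hn : 0 < n) (h : 2 * (n : F) - 1 = 0) : wcdim F (Gn n) = 2 := by
  rw [wcdim, (equiv2 hn h).finrank_eq, Module.finrank_prod, Module.finrank_self]

lemma wcdim_eq_one (hn : 0 < n) (h : 2 * (n : F) - 1 ≠ 0) : wcdim F (Gn n) = 1 := by
  rw [wcdim, (equiv1 hn h).finrank_eq, Module.finrank_self]

end WCaux

theorem wcdim_Gn_odd_prime (p : ℕ) [Fact p.Prime] (hodd : Odd p) :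
    Fintype.card (GnV ((p + 1) / 2)) = p + 5 ∧
    wcdim (ZMod p) (Gn ((p + 1) / 2)) = 2 ∧
    wcdim ℚ (Gn ((p + 1) / 2)) = 1 := by
  obtain ⟨m, rfl⟩ := hodd
  have hp := (Fact.out : Nat.Prime (2 * m + 1))
  have hn2 : (2 * m + 1 + 1) / 2 = m + 1 := by omega
  rw [hn2]
  have hn : 0 < m + 1 := Nat.succ_pos m
  refine ⟨?_, ?_, ?_⟩
  · simp only [GnV, Fintype.card_sum, Fintype.card_fin]
    omega
  · refine WCaux.wcdim_eq_two hn ?_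
    have h0 : ((2 * m + 1 : ℕ) : ZMod (2 * m + 1)) = 0 := ZMod.natCast_self _
    push_cast at h0 ⊢
    linear_combination h0
  · refine WCaux.wcdim_eq_one hn ?_
    intro hcon
    have h0 : ((2 * m + 1 : ℕ) : ℚ) = 0 := by
      push_cast at hcon ⊢
      linear_combination hcon
    exact hp.pos.ne' (by exact_mod_cast h0)
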